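/- arXiv:0804.0152 — 9 statements merged into one kernel-verified Lean document; each statement's English description precedes it below -/
import Mathlib

section
/- Let N be an odd perfect number (i.e., N is odd and σ(N) = 2N, where σ is the sum-of-divisors function). Then N ≡ 1 (mod 12) or N ≡ 9 (mod 36). -/
open Finset

/-- Pairing divisors `d ↦ N / d`: if each pair sums to `0` in `ZMod m` and no divisor is
self-paired, the divisor sum vanishes in `ZMod m`. -/
lemma pair_sum_zero (N : ℕ) (m : ℕ) (hN : N ≠ 0)
    (h0 : ∀ d ∈ N.divisors, ((d : ZMod m) + ((N / d : ℕ) : ZMod m)) = 0)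
    (hne : ∀ d ∈ N.divisors, N / d ≠ d) :
    ((∑ d ∈ N.divisors, d : ℕ) : ZMod m) = 0 := by
  rw [Nat.cast_sum]
  refine Finset.sum_involution (fun d _ => N / d) (fun d hd => h0 d hd)
    (fun d hd _ => hne d hd) (fun d hd => ?_) (fun d hd => ?_)
  · rw [Nat.mem_divisors] at hd ⊢
    exact ⟨Nat.div_dvd_of_dvd hd.1, hN⟩
  · exact Nat.div_div_self (Nat.mem_divisors.mp hd).1 hN

theorem touchard (N : ℕ) (hodd : Odd N) (hperf : ∑ d ∈ N.divisors, d = 2 * N) :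
    N % 12 = 1 ∨ N % 36 = 9 := by
  have hN0 : N ≠ 0 := by rintro rfl; simp at hodd
  have hN2 : ¬ (2 ∣ N) := by
    rw [Nat.odd_iff] at hodd; omega
  -- Step 1: N % 4 = 1
  have h4 : N % 4 = 1 := by
    rw [Nat.odd_iff] at hodd
    by_contra h
    have hN4 : N % 4 = 3 := by omega
    have hcast : (N : ZMod 4) = 3 := by
      rw [← ZMod.natCast_mod, hN4]; rfl
    have hz : ((∑ d ∈ N.divisors, d : ℕ) : ZMod 4) = 0 := by
      refine pair_sum_zero N 4 hN0 (fun d hd => ?_) (fun d hd => ?_)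
      · have hdvd := (Nat.mem_divisors.mp hd).1
        have hmul : d * (N / d) = N := Nat.mul_div_cancel' hdvd
        have : (d : ZMod 4) * ((N / d : ℕ) : ZMod 4) = 3 := by
          rw [← Nat.cast_mul, hmul, hcast]
        revert this
        generalize (d : ZMod 4) = a
        generalize ((N / d : ℕ) : ZMod 4) = b
        revert a b; decide
      · intro heq
        have hdvd := (Nat.mem_divisors.mp hd).1
        have hmul : d * (N / d) = N := Nat.mul_div_cancel' hdvd
        rw [heq] at hmul
        have : (d : ZMod 4) * (d : ZMod 4) = 3 := by
          rw [← Nat.cast_mul, hmul, hcast]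
        revert this; generalize (d : ZMod 4) = a; revert a; decide
    rw [hperf, Nat.cast_mul] at hz
    have : (4 : ℕ) ∣ 2 * N := by
      have := (ZMod.natCast_eq_zero_iff (2 * N) 4).mp (by push_cast; exact hz)
      exact this
    omega
  -- Step 2: N % 3 ≠ 2
  have h3 : N % 3 ≠ 2 := by
    intro hN3
    have hcast : (N : ZMod 3) = 2 := by
      rw [← ZMod.natCast_mod, hN3]; rfl
    have hz : ((∑ d ∈ N.divisors, d : ℕ) : ZMod 3) = 0 := by
      refine pair_sum_zero N 3 hN0 (fun d hd => ?_) (fun d hd => ?_)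
      · have hdvd := (Nat.mem_divisors.mp hd).1
        have hmul : d * (N / d) = N := Nat.mul_div_cancel' hdvd
        have : (d : ZMod 3) * ((N / d : ℕ) : ZMod 3) = 2 := by
          rw [← Nat.cast_mul, hmul, hcast]
        revert this
        generalize (d : ZMod 3) = a
        generalize ((N / d : ℕ) : ZMod 3) = b
        revert a b; decide
      · intro heq
        have hdvd := (Nat.mem_divisors.mp hd).1
        have hmul : d * (N / d) = N := Nat.mul_div_cancel' hdvd
        rw [heq] at hmul
        have : (d : ZMod 3) * (d : ZMod 3) = 2 := by
          rw [← Nat.cast_mul, hmul, hcast]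
        revert this; generalize (d : ZMod 3) = a; revert a; decide
    rw [hperf, Nat.cast_mul] at hz
    have : (3 : ℕ) ∣ 2 * N := by
      have := (ZMod.natCast_eq_zero_iff (2 * N) 3).mp (by push_cast; exact hz)
      exact this
    omega
  -- Case split on 3 ∣ N
  have h3cases : N % 3 = 0 ∨ N % 3 = 1 := by omega
  rcases h3cases with h | h
  · -- 3 ∣ N; show 9 ∣ N
    right
    have h9 : 9 ∣ N := by
      by_contra h9
      set M := N / 3 with hM
      have h3d : 3 ∣ N := by omega
      have hNM : N = 3 * M := by omega
      have h3M : ¬ 3 ∣ M := by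
        intro hc
        exact h9 (by obtain ⟨k, hk⟩ := hc; exact ⟨k, by omega⟩)
      have hcop : Nat.Coprime 3 M :=
        (Nat.Prime.coprime_iff_not_dvd (by norm_num)).mpr h3M
      have := Nat.Coprime.sum_divisors_mul hcop
      rw [← hNM] at this
      have h3sum : (∑ d ∈ Nat.divisors 3, d) = 4 := by decide
      rw [hperf, h3sum] at this
      omega
    omega
  · left; omega
end

section
/- Let N be an odd perfect number (i.e., N is odd and σ(N) = 2N). If 3 divides N, then N ≡ 9 (mod 36). -/
open Finset

lemma sum3_pow (k : ℕ) : ∑ i ∈ Finset.range (2*k), 3^i = 4 * ∑ j ∈ Finset.range k, 9^j := by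
  induction k with
  | zero => simp
  | succ k ih =>
    have h2 : 2 * (k+1) = (2*k) + 1 + 1 := by ring
    rw [h2, Finset.sum_range_succ, Finset.sum_range_succ, ih, Finset.sum_range_succ]
    have e1 : (3:ℕ)^(2*k) = 9^k := by rw [pow_mul]; norm_num
    have e2 : (3:ℕ)^(2*k+1) = 3 * 9^k := by rw [pow_succ, e1]; ring
    rw [e1, e2]; ring

lemma zmod4_mul (x y : ZMod 4) (h : x * y = 3) : x + y = 0 := by revert x y; decide

lemma zmod4_sq (x : ZMod 4) : x * x ≠ 3 := by revert x; decide

theorem touchard_three_dvd (N : ℕ) (hodd : Odd N) (hperf : ∑ d ∈ N.divisors, d = 2 * N)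
    (h3 : 3 ∣ N) : N % 36 = 9 := by
  have hN0 : N ≠ 0 := by rintro rfl; simp at hodd
  have hN2 : ¬ 2 ∣ N := by
    have := Nat.odd_iff.mp hodd; omega
  have h4 : ¬ (4 ∣ ∑ d ∈ N.divisors, d) := by
    rw [hperf]; intro h; exact hN2 (by omega)
  -- Step 1 : N % 4 = 1
  have hmod4 : N % 4 = 1 := by
    by_contra h
    have h3' : N % 4 = 3 := by
      have := Nat.odd_iff.mp hodd; omega
    apply h4
    have hz : ((∑ d ∈ N.divisors, d : ℕ) : ZMod 4) = 0 := by
      push_cast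
      have hN4 : ((N : ℕ) : ZMod 4) = 3 := by
        rw [← ZMod.natCast_mod N 4, h3']; norm_num
      refine Finset.sum_involution (fun d _ => N / d) ?_ ?_ ?_ ?_
      · intro d hd
        obtain ⟨hdvd, -⟩ := Nat.mem_divisors.mp hd
        apply zmod4_mul
        have hdn : d * (N / d) = N := Nat.mul_div_cancel' hdvd
        rw [← Nat.cast_mul, hdn, hN4]
      · intro d hd _
        obtain ⟨hdvd, -⟩ := Nat.mem_divisors.mp hd
        intro heq
        have hsq : d * d = N := by
          conv_rhs => rw [← Nat.mul_div_cancel' hdvd, heq]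
        have : ((d : ZMod 4)) * d = 3 := by
          rw [← Nat.cast_mul, hsq, hN4]
        exact zmod4_sq _ this
      · intro d hd
        obtain ⟨hdvd, -⟩ := Nat.mem_divisors.mp hd
        exact Nat.mem_divisors.mpr ⟨Nat.div_dvd_of_dvd hdvd, hN0⟩
      · intro d hd
        obtain ⟨hdvd, -⟩ := Nat.mem_divisors.mp hd
        exact Nat.div_div_self hdvd hN0
    exact (ZMod.natCast_eq_zero_iff _ _).mp hz
  -- Step 2 : 9 ∣ N
  have hp3 : Nat.Prime 3 := by norm_num
  set a := N.factorization 3 with ha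
  have ha1 : 1 ≤ a := (hp3.dvd_iff_one_le_factorization hN0).mp h3
  have haeven : Even a := by
    by_contra hae
    obtain ⟨t, ht⟩ := Nat.not_even_iff_odd.mp hae
    apply h4
    have hcop : Nat.Coprime (3^a) (N / 3^a) :=
      (Nat.coprime_ordCompl hp3 hN0).pow_left _
    have hmul : ∑ d ∈ N.divisors, d
        = (∑ d ∈ (3^a).divisors, d) * (∑ d ∈ (N / 3^a).divisors, d) := by
      conv_lhs => rw [← Nat.ordProj_mul_ordCompl_eq_self N 3]
      exact hcop.sum_divisors_mul
    rw [hmul]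
    apply Dvd.dvd.mul_right
    rw [Nat.sum_divisors_prime_pow hp3]
    have haa : a + 1 = 2 * (t + 1) := by omega
    rw [haa, sum3_pow]
    exact Dvd.intro _ rfl
  have h9 : 9 ∣ N := by
    have ha2 : 2 ≤ a := by
      rcases haeven with ⟨b, hb⟩; omega
    calc (9:ℕ) = 3^2 := by norm_num
    _ ∣ 3^a := pow_dvd_pow 3 ha2
    _ ∣ N := Nat.ordProj_dvd N 3
  obtain ⟨k, hk⟩ := h9
  omega
end

section
/- Let N be an odd perfect number (i.e., N is odd and σ(N) = 2N). If 3 does not divide N, then N ≡ 1 (mod 12). -/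
lemma sum_divisors_cast_eq_zero (N : ℕ) (hN : N ≠ 0) (m : ℕ)
    (hpair : ∀ x y : ZMod m, x * y = (N : ZMod m) → x + y = 0)
    (hsq : ∀ x : ZMod m, x * x ≠ (N : ZMod m)) :
    ∑ d ∈ N.divisors, (d : ZMod m) = 0 := by
  apply Finset.sum_involution (fun a _ => N / a)
  · intro a ha
    have hdvd : a ∣ N := (Nat.mem_divisors.mp ha).1
    apply hpair
    rw [← Nat.cast_mul, Nat.mul_div_cancel' hdvd]
  · intro a ha _
    have hdvd : a ∣ N := (Nat.mem_divisors.mp ha).1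
    intro h
    apply hsq (a : ZMod m)
    have : a * a = N := by
      nth_rewrite 2 [← h]
      exact Nat.mul_div_cancel' hdvd
    rw [← Nat.cast_mul, this]
  · intro a ha
    have hdvd : a ∣ N := (Nat.mem_divisors.mp ha).1
    exact Nat.mem_divisors.mpr ⟨Nat.div_dvd_of_dvd hdvd, hN⟩
  · intro a ha
    exact Nat.div_div_self (Nat.mem_divisors.mp ha).1 hN

theorem touchard_not_three_dvd (N : ℕ) (hodd : Odd N) (hperf : ∑ d ∈ N.divisors, d = 2 * N)
    (h3 : ¬ 3 ∣ N) : N % 12 = 1 := by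
  have hmod2 : N % 2 = 1 := Nat.odd_iff.mp hodd
  have hN : N ≠ 0 := by omega
  -- N ≡ 1 mod 4
  have h4 : N % 4 = 1 := by
    by_contra h
    have h43 : N % 4 = 3 := by omega
    have hcast : (N : ZMod 4) = 3 := by
      rw [← ZMod.natCast_mod, h43]; rfl
    have hz : ∑ d ∈ N.divisors, (d : ZMod 4) = 0 := by
      apply sum_divisors_cast_eq_zero N hN 4 <;> rw [hcast] <;> decide
    have h2N : ((2 * N : ℕ) : ZMod 4) = 0 := by
      rw [← hperf]; push_cast; exact hz
    rw [Nat.cast_mul, hcast] at h2N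
    exact absurd h2N (by decide)
  -- N ≡ 1 mod 3
  have h3' : N % 3 = 1 := by
    have hne : N % 3 ≠ 0 := fun h => h3 (Nat.dvd_of_mod_eq_zero h)
    by_contra h
    have h32 : N % 3 = 2 := by omega
    have hcast : (N : ZMod 3) = 2 := by
      rw [← ZMod.natCast_mod, h32]; rfl
    have hz : ∑ d ∈ N.divisors, (d : ZMod 3) = 0 := by
      apply sum_divisors_cast_eq_zero N hN 3 <;> rw [hcast] <;> decide
    have h2N : ((2 * N : ℕ) : ZMod 3) = 0 := by
      rw [← hperf]; push_cast; exact hz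
    rw [Nat.cast_mul, hcast] at h2N
    exact absurd h2N (by decide)
  omega
end

section
/- Let N be an odd perfect number with N = p^α · Q², where p is a prime, p ≡ 5 (mod 12), α is odd, Q is odd, and p does not divide Q. Then 3 divides Q (equivalently, N can be written as p^α · (3Q')² for some Q'). -/
theorem three_dvd_Q (N p α Q : ℕ) (hodd : Odd N) (hperf : ∑ d ∈ N.divisors, d = 2 * N)
    (hN : N = p ^ α * Q ^ 2) (hp : p.Prime) (hp5 : p % 12 = 5)
    (hα : Odd α) (hQ : Odd Q) (hpQ : ¬ p ∣ Q) :
    3 ∣ Q := by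
  -- coprimality of p^α and Q^2
  have hcop : Nat.Coprime (p ^ α) (Q ^ 2) :=
    Nat.Coprime.pow α 2 (Nat.Prime.coprime_iff_not_dvd hp |>.2 hpQ)
  have hmul : ∑ d ∈ N.divisors, d =
      (∑ d ∈ (p ^ α).divisors, d) * ∑ d ∈ (Q ^ 2).divisors, d := by
    rw [hN]; exact Nat.Coprime.sum_divisors_mul hcop
  -- p ≡ 2 mod 3
  have hp3 : p % 3 = 2 := by omega
  -- 3 divides σ(p^α)
  have hdvd : 3 ∣ ∑ d ∈ (p ^ α).divisors, d := by
    have : ∑ d ∈ (p ^ α).divisors, d = ∑ k ∈ Finset.range (α + 1), p ^ k := by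
      rw [← ArithmeticFunction.sigma_one_apply,
        ArithmeticFunction.sigma_one_apply_prime_pow hp]
    rw [this]
    have h3 : (3 : ℕ) ∣ ∑ k ∈ Finset.range (α + 1), p ^ k := by
      have : ((∑ k ∈ Finset.range (α + 1), p ^ k : ℕ) : ZMod 3) = 0 := by
        push_cast
        have hpz : (p : ZMod 3) = -1 := by
          rw [← ZMod.natCast_mod p 3, hp3]; decide
        rw [hpz, neg_one_geom_sum, if_pos (by simpa using hα.add_one)]
      exact (ZMod.natCast_eq_zero_iff _ 3).mp this
    exact h3
  have h2N : 3 ∣ 2 * N := hperf ▸ hmul ▸ Dvd.dvd.mul_right hdvd _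
  have h3p : ¬ (3 : ℕ) ∣ p := by omega
  have h3 : Nat.Prime 3 := by norm_num
  have hQ2 : 3 ∣ Q ^ 2 := by
    rcases (Nat.Prime.dvd_mul h3).1 h2N with h | h
    · omega
    · rw [hN] at h
      rcases (Nat.Prime.dvd_mul h3).1 h with h' | h'
      · exact absurd (h3.dvd_of_dvd_pow h') h3p
      · exact h'
  exact h3.dvd_of_dvd_pow hQ2
end

section
/- Let N be an odd perfect number (i.e., N is odd and σ(N) = 2N). Then there exist a prime p, a positive integer α with α ≡ 1 (mod 4), p ∤ Q, Q odd, and either (a) p ≡ 1 (mod 12) and N = p^α · Q², or (b) p ≡ 5 (mod 12) and N = p^α · (3Q)². -/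
open Finset

lemma pow_mod4_three {p : ℕ} (hp : p % 4 = 3) (n : ℕ) :
    p ^ n % 4 = if n % 2 = 0 then 1 else 3 := by
  induction n with
  | zero => simp
  | succ n ih =>
    rw [pow_succ, Nat.mul_mod, ih, hp]
    split <;> split <;> omega

lemma geom_mod4_three {p : ℕ} (hp : p % 4 = 3) (n : ℕ) :
    (∑ k ∈ range n, p ^ k) % 4 = if n % 2 = 0 then 0 else 1 := by
  induction n with
  | zero => simp
  | succ n ih =>
    rw [Finset.sum_range_succ, Nat.add_mod, ih, pow_mod4_three hp]
    split <;> split <;> omega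

lemma geom_mod4_one {p : ℕ} (hp : p % 4 = 1) (n : ℕ) :
    (∑ k ∈ range n, p ^ k) % 4 = n % 4 := by
  induction n with
  | zero => simp
  | succ n ih =>
    have hpn : p ^ n % 4 = 1 := by simp [Nat.pow_mod, hp]
    rw [Finset.sum_range_succ, Nat.add_mod, ih, hpn]
    omega

lemma pow_mod3_two {p : ℕ} (hp : p % 3 = 2) (n : ℕ) :
    p ^ n % 3 = if n % 2 = 0 then 1 else 2 := by
  induction n with
  | zero => simp
  | succ n ih =>
    rw [pow_succ, Nat.mul_mod, ih, hp]
    split <;> split <;> omega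

lemma geom_mod3_two {p : ℕ} (hp : p % 3 = 2) (n : ℕ) :
    (∑ k ∈ range n, p ^ k) % 3 = if n % 2 = 0 then 0 else 1 := by
  induction n with
  | zero => simp
  | succ n ih =>
    rw [Finset.sum_range_succ, Nat.add_mod, ih, pow_mod3_two hp]
    split <;> split <;> omega

lemma geom_mod2 {p : ℕ} (hp : p % 2 = 1) (n : ℕ) :
    (∑ k ∈ range n, p ^ k) % 2 = n % 2 := by
  induction n with
  | zero => simp
  | succ n ih =>
    have hpn : p ^ n % 2 = 1 := by simp [Nat.pow_mod, hp]
    rw [Finset.sum_range_succ, Nat.add_mod, ih, hpn]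
    omega


theorem refined_euler_form (N : ℕ) (hodd : Odd N) (hperf : ∑ d ∈ N.divisors, d = 2 * N) :
    ∃ (p α Q : ℕ), p.Prime ∧ 0 < α ∧ α % 4 = 1 ∧ ¬ p ∣ Q ∧ Odd Q ∧
      ((p % 12 = 1 ∧ N = p ^ α * Q ^ 2) ∨ (p % 12 = 5 ∧ N = p ^ α * (3 * Q) ^ 2)) := by
  have hN0 : N ≠ 0 := by rintro rfl; simp [Nat.odd_iff] at hodd
  have h2N : ¬ 2 ∣ N := by rw [Nat.odd_iff] at hodd; omega
  have hprod : ∏ p ∈ N.primeFactors, ∑ k ∈ range (N.factorization p + 1), p ^ k = 2 * N :=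
    (Nat.sum_divisors hN0).symm.trans hperf
  have hqodd : ∀ q ∈ N.primeFactors, q % 2 = 1 := by
    intro q hq
    rcases (Nat.prime_of_mem_primeFactors hq).eq_two_or_odd with h | h
    · exact absurd (h ▸ Nat.dvd_of_mem_primeFactors hq) h2N
    · exact h
  have h2dvd : (2 : ℕ) ∣ ∏ p ∈ N.primeFactors, ∑ k ∈ range (N.factorization p + 1), p ^ k := by
    rw [hprod]; exact ⟨N, rfl⟩
  obtain ⟨p, hpF, hp2⟩ := (Nat.prime_iff.mp Nat.prime_two).exists_mem_finset_dvd h2dvd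
  have hpp := Nat.prime_of_mem_primeFactors hpF
  have hpodd : p % 2 = 1 := hqodd p hpF
  set g := fun q : ℕ => ∑ k ∈ range (N.factorization q + 1), q ^ k with hgdef
  replace hp2 : 2 ∣ g p := hp2
  set R := ∏ q ∈ N.primeFactors.erase p, g q with hR
  have hsplit : g p * R = 2 * N := by
    rw [hR, Finset.mul_prod_erase _ _ hpF]; exact hprod
  have hRodd : R % 2 = 1 := by
    by_contra h
    obtain ⟨a, ha⟩ := hp2
    obtain ⟨b, hb⟩ : 2 ∣ R := by omega
    have h4 : 2 * N = 2 * (2 * (a * b)) := by rw [← hsplit, ha, hb]; ring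
    exact h2N ⟨a * b, Nat.eq_of_mul_eq_mul_left two_pos h4⟩
  have hgp4 : g p % 4 = 2 := by
    by_contra h
    have h2gp : 2 ∣ g p := hp2
    obtain ⟨c, hc⟩ : 4 ∣ g p := by omega
    have h4 : 2 * N = 2 * (2 * (c * R)) := by rw [← hsplit, hc]; ring
    exact h2N ⟨c * R, Nat.eq_of_mul_eq_mul_left two_pos h4⟩
  have hp4 : p % 4 = 1 := by
    rcases (by omega : p % 4 = 1 ∨ p % 4 = 3) with h | h
    · exact h
    · exfalso
      have h1 := geom_mod4_three h (N.factorization p + 1)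
      have hgp : g p % 4 = (∑ k ∈ range (N.factorization p + 1), p ^ k) % 4 := rfl
      rw [hgp, h1] at hgp4
      split at hgp4 <;> omega
  have hα4 : N.factorization p % 4 = 1 := by
    have h1 := geom_mod4_one hp4 (N.factorization p + 1)
    have hgp : g p % 4 = (∑ k ∈ range (N.factorization p + 1), p ^ k) % 4 := rfl
    rw [hgp, h1] at hgp4
    omega
  have heven : ∀ q ∈ N.primeFactors.erase p, N.factorization q % 2 = 0 := by
    intro q hq
    have hqF := Finset.mem_of_mem_erase hq
    obtain ⟨t, ht⟩ : g q ∣ R := Finset.dvd_prod_of_mem g hq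
    have hgqodd : g q % 2 = 1 := by
      by_contra h
      obtain ⟨s, hs⟩ : 2 ∣ g q := by omega
      have : R = 2 * (s * t) := by rw [ht, hs]; ring
      omega
    have h1 := geom_mod2 (hqodd q hqF) (N.factorization q + 1)
    have hgq2 : g q % 2 = (∑ k ∈ range (N.factorization q + 1), q ^ k) % 2 := rfl
    rw [hgq2, h1] at hgqodd
    omega
  set Q₀ := ∏ q ∈ N.primeFactors.erase p, q ^ (N.factorization q / 2) with hQ₀
  have hM : ∏ q ∈ N.primeFactors.erase p, q ^ N.factorization q = Q₀ ^ 2 := by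
    rw [hQ₀, ← Finset.prod_pow]
    refine Finset.prod_congr rfl fun q hq => ?_
    rw [← pow_mul]
    congr 1
    have := heven q hq
    omega
  have hNprod : N = ∏ q ∈ N.primeFactors, q ^ N.factorization q :=
    (Nat.factorization_prod_pow_eq_self hN0).symm
  have hNfac : N = p ^ (N.factorization p) * Q₀ ^ 2 := by
    conv_lhs => rw [hNprod]
    rw [← hM]
    exact (Finset.mul_prod_erase _ _ hpF).symm
  have hpQ₀ : ¬ p ∣ Q₀ := by
    intro hdvd
    obtain ⟨q, hq, hdq⟩ := (Nat.prime_iff.mp hpp).exists_mem_finset_dvd hdvd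
    have hqp := Nat.prime_of_mem_primeFactors (Finset.mem_of_mem_erase hq)
    have : p = q := (Nat.prime_dvd_prime_iff_eq hpp hqp).mp (hpp.dvd_of_dvd_pow hdq)
    exact (Finset.ne_of_mem_erase hq) this.symm
  have hQ₀N : Q₀ ∣ N := by
    rw [hNfac]
    exact Dvd.dvd.mul_left ⟨Q₀, by ring⟩ _
  have hQ₀odd : Q₀ % 2 = 1 := by
    by_contra h
    obtain ⟨u, hu⟩ := hQ₀N
    obtain ⟨s, hs⟩ : 2 ∣ Q₀ := by omega
    have : N = 2 * (s * u) := by rw [hu, hs]; ring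
    exact h2N ⟨s * u, this⟩
  have hαpos : 0 < N.factorization p := by omega
  have hp3 : p % 3 = 1 ∨ p % 3 = 2 := by
    have h3 : ¬ (3 ∣ p) := by
      intro h
      have := (Nat.prime_dvd_prime_iff_eq Nat.prime_three hpp).mp h
      omega
    omega
  rcases hp3 with h3 | h3
  · exact ⟨p, N.factorization p, Q₀, hpp, hαpos, hα4, hpQ₀, Nat.odd_iff.mpr hQ₀odd,
      Or.inl ⟨by omega, hNfac⟩⟩
  · have h3gp : g p % 3 = 0 := by
      have h1 := geom_mod3_two h3 (N.factorization p + 1)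
      have hgp : g p % 3 = (∑ k ∈ range (N.factorization p + 1), p ^ k) % 3 := rfl
      rw [hgp, h1]
      split <;> omega
    have h3N : 3 ∣ N := by
      obtain ⟨s, hs⟩ : 3 ∣ g p := by omega
      have h1 : 2 * N = 3 * (s * R) := by rw [← hsplit, hs]; ring
      have h32 : (3 : ℕ) ∣ 2 * N := ⟨s * R, h1⟩
      omega
    have h3Q₀ : 3 ∣ Q₀ := by
      rcases (Nat.Prime.dvd_mul Nat.prime_three).mp (hNfac ▸ h3N) with h | h
      · exfalso
        have := (Nat.prime_dvd_prime_iff_eq Nat.prime_three hpp).mp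
          (Nat.Prime.dvd_of_dvd_pow Nat.prime_three h)
        omega
      · exact Nat.Prime.dvd_of_dvd_pow Nat.prime_three h
    obtain ⟨Q, hQ⟩ := h3Q₀
    refine ⟨p, N.factorization p, Q, hpp, hαpos, hα4, ?_, ?_,
      Or.inr ⟨by omega, by rw [← hQ]; exact hNfac⟩⟩
    · intro h; exact hpQ₀ (hQ ▸ Dvd.dvd.mul_left h 3)
    · rw [Nat.odd_iff]
      by_contra h
      obtain ⟨s, hs⟩ : 2 ∣ Q := by omega
      have : Q₀ = 2 * (3 * s) := by rw [hQ, hs]; ring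
      omega
end

section
/- Let N be an odd perfect number with N = p^α · Q², where p is a prime, p ≡ 1 (mod 12), α ≡ 5 (mod 12), Q is odd, and p does not divide Q. Then 3 divides N. -/
theorem three_dvd_N (N p α Q : ℕ) (hodd : Odd N) (hperf : ∑ d ∈ N.divisors, d = 2 * N)
    (hN : N = p ^ α * Q ^ 2) (hp : p.Prime) (hp1 : p % 12 = 1)
    (hα : α % 12 = 5) (hQ : Odd Q) (hpQ : ¬ p ∣ Q) :
    3 ∣ N := by
  have hcop : Nat.Coprime (p ^ α) (Q ^ 2) :=
    ((Nat.Prime.coprime_iff_not_dvd hp).mpr hpQ).pow α 2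
  have hσmul : ArithmeticFunction.sigma 1 N =
      ArithmeticFunction.sigma 1 (p ^ α) * ArithmeticFunction.sigma 1 (Q ^ 2) := by
    rw [hN]
    exact ArithmeticFunction.isMultiplicative_sigma.map_mul_of_coprime hcop
  have hsum : ArithmeticFunction.sigma 1 (p ^ α) = ∑ i ∈ Finset.range (α + 1), p ^ i := by
    rw [ArithmeticFunction.sigma_one_apply, Nat.sum_divisors_prime_pow hp]
  have h3 : (3 : ℕ) ∣ ArithmeticFunction.sigma 1 (p ^ α) := by
    rw [hsum]
    have hcast : ((∑ i ∈ Finset.range (α + 1), p ^ i : ℕ) : ZMod 3) = 0 := by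
      push_cast
      have hp3 : ((p : ℕ) : ZMod 3) = 1 := by
        have : p % 3 = 1 := by omega
        rw [← ZMod.natCast_mod, this]; norm_num
      simp [hp3]
      have h31 : (3 : ℕ) ∣ α + 1 := by omega
      have := (ZMod.natCast_eq_zero_iff (α + 1) 3).mpr h31
      push_cast at this
      linear_combination this
    exact (ZMod.natCast_eq_zero_iff _ 3).mp hcast
  have h3N : (3 : ℕ) ∣ 2 * N := by
    rw [← hperf, ← ArithmeticFunction.sigma_one_apply, hσmul]
    exact Dvd.dvd.mul_right h3 _
  omega
end

section
/- Let N be an odd perfect number with N = p^α · Q², where p is a prime, p ≡ 1 (mod 12), α ≡ 5 (mod 12), Q is odd, p does not divide Q, and (p − 1)/12 ≡ 2, 3, 5, or 6 (mod 7). Then 21 divides N. -/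
theorem twentyone_dvd_N (N p α Q : ℕ) (hodd : Odd N) (hperf : ∑ d ∈ N.divisors, d = 2 * N)
    (hN : N = p ^ α * Q ^ 2) (hp : p.Prime) (hp1 : p % 12 = 1)
    (hα : α % 12 = 5) (hQ : Odd Q) (hpQ : ¬ p ∣ Q)
    (hn : (p - 1) / 12 % 7 = 2 ∨ (p - 1) / 12 % 7 = 3 ∨
          (p - 1) / 12 % 7 = 5 ∨ (p - 1) / 12 % 7 = 6) :
    21 ∣ N := by
  set S : ℕ := ∑ i ∈ Finset.range (α + 1), p ^ i with hS
  have hcop : (p ^ α).Coprime (Q ^ 2) :=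
    Nat.Coprime.pow _ _ (hp.coprime_iff_not_dvd.mpr hpQ)
  have hmul : ∑ d ∈ N.divisors, d = S * ∑ d ∈ (Q ^ 2).divisors, d := by
    rw [hN, hcop.sum_divisors_mul, Nat.sum_divisors_prime_pow hp]
  have hSdvd : S ∣ 2 * N := ⟨∑ d ∈ (Q ^ 2).divisors, d, by rw [← hperf, hmul]⟩
  -- 3 ∣ S
  have h3 : (3 : ℕ) ∣ S := by
    have hp3 : ((p : ZMod 3)) = 1 := by
      have h : p % 3 = 1 := by omega
      rw [← ZMod.natCast_mod p 3, h, Nat.cast_one]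
    have hd : (3 : ℕ) ∣ α + 1 := by omega
    have hcast : ((S : ZMod 3)) = ((α + 1 : ℕ) : ZMod 3) := by
      rw [hS]
      push_cast
      simp [hp3]
    have : ((S : ZMod 3)) = 0 := by
      rw [hcast]
      exact (ZMod.natCast_eq_zero_iff _ _).mpr hd
    exact (ZMod.natCast_eq_zero_iff S 3).mp this
  -- 7 ∣ S
  have h7 : (7 : ℕ) ∣ S := by
    haveI : Fact (Nat.Prime 7) := ⟨by norm_num⟩
    have hp7 : p % 7 = 2 ∨ p % 7 = 3 ∨ p % 7 = 4 ∨ p % 7 = 5 := by omega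
    have hpne : ((p : ZMod 7)) ≠ 0 := by
      rw [Ne, ZMod.natCast_eq_zero_iff]
      intro h
      omega
    have hpow : ((p : ZMod 7)) ^ (α + 1) = 1 := by
      obtain ⟨m, hm⟩ : ∃ m, α + 1 = 6 * m := ⟨(α + 1) / 6, by omega⟩
      rw [hm, pow_mul]
      have h6 := ZMod.pow_card_sub_one_eq_one hpne
      norm_num at h6 ⊢
      rw [h6, one_pow]
    have hgeom : (∑ i ∈ Finset.range (α + 1), ((p : ZMod 7)) ^ i) * ((p : ZMod 7) - 1)
        = (p : ZMod 7) ^ (α + 1) - 1 := geom_sum_mul _ _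
    have hne1 : ((p : ZMod 7)) - 1 ≠ 0 := by
      rw [sub_ne_zero]
      intro h1
      have h2 : p ≡ 1 [MOD 7] := (ZMod.natCast_eq_natCast_iff p 1 7).mp (by exact_mod_cast h1)
      have h3 : p % 7 = 1 % 7 := h2
      omega
    have hzero : (∑ i ∈ Finset.range (α + 1), ((p : ZMod 7)) ^ i) = 0 := by
      rw [hpow, sub_self] at hgeom
      exact (mul_eq_zero.mp hgeom).resolve_right hne1
    have : ((S : ZMod 7)) = 0 := by
      rw [hS]; push_cast; exact hzero
    exact (ZMod.natCast_eq_zero_iff S 7).mp this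
  have h21 : (21 : ℕ) ∣ S := Nat.Coprime.mul_dvd_of_dvd_of_dvd (by norm_num) h3 h7
  exact Nat.Coprime.dvd_of_dvd_mul_left (by norm_num) (h21.trans hSdvd)
end

section
/- Let N be an odd perfect number with N = p^α · Q², where p is a prime, p ≡ 5 (mod 12), α ≡ 5 (mod 12), Q is odd, p does not divide Q, and (p − 5)/12 ≡ 0, 1, 4, or 5 (mod 7). Then 7 divides N. -/
theorem seven_dvd_N (N p α Q : ℕ) (hodd : Odd N) (hperf : ∑ d ∈ N.divisors, d = 2 * N)
    (hN : N = p ^ α * Q ^ 2) (hp : p.Prime) (hp5 : p % 12 = 5)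
    (hα : α % 12 = 5) (hQ : Odd Q) (hpQ : ¬ p ∣ Q)
    (hn : (p - 5) / 12 % 7 = 0 ∨ (p - 5) / 12 % 7 = 1 ∨
          (p - 5) / 12 % 7 = 4 ∨ (p - 5) / 12 % 7 = 5) :
    7 ∣ N := by
  -- p mod 7 ∈ {2,3,4,5}
  have h7 : p % 7 = 2 ∨ p % 7 = 3 ∨ p % 7 = 4 ∨ p % 7 = 5 := by omega
  -- 7 divides σ(p^α)
  have hkey : (7 : ℕ) ∣ ∑ d ∈ (p ^ α).divisors, d := by
    rw [Nat.sum_divisors_prime_pow hp]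
    rw [← ZMod.natCast_eq_zero_iff _ 7]
    haveI : Fact (Nat.Prime 7) := ⟨by norm_num⟩
    push_cast
    set x : ZMod 7 := (p : ZMod 7) with hx
    have hx0 : x ≠ 0 := by
      rw [hx, Ne, ZMod.natCast_eq_zero_iff]
      omega
    have hx1 : x ≠ 1 := by
      rw [hx, Ne, ← Nat.cast_one, ZMod.natCast_eq_natCast_iff', Nat.one_mod]
      omega
    have hord : x ^ 6 = 1 := ZMod.pow_card_sub_one_eq_one hx0
    have h6 : 6 ∣ α + 1 := by omega
    obtain ⟨m, hm⟩ := h6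
    have hpow : x ^ (α + 1) = 1 := by
      rw [hm, pow_mul, hord, one_pow]
    have := geom_sum_mul x (α + 1)
    rw [hpow, sub_self] at this
    rcases mul_eq_zero.mp this with h | h
    · exact h
    · exact absurd (by linear_combination h : x = 1) hx1
  have hcop : (p ^ α).Coprime (Q ^ 2) :=
    Nat.Coprime.pow α 2 ((Nat.Prime.coprime_iff_not_dvd hp).mpr hpQ)
  have hmul : ∑ d ∈ N.divisors, d
      = (∑ d ∈ (p ^ α).divisors, d) * ∑ d ∈ (Q ^ 2).divisors, d := by
    rw [hN]; exact Nat.Coprime.sum_divisors_mul hcop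
  have h2N : (7 : ℕ) ∣ 2 * N := by
    rw [← hperf, hmul]; exact hkey.mul_right _
  omega
end

section
/- Let N be an odd perfect number (i.e., N is odd and σ(N) = 2N). Then there exist a prime p, non-negative integers n and λ, and an odd positive integer Q with p ∤ Q such that one of the following holds: (i) p = 12n+1 and N = p^{12λ+1} Q²; (ii) p = 12n+1 and N = p^{12λ+9} Q²; (iii) p = 12n+5 and N = p^{12λ+1} (3Q)²; (iv) p = 12n+5 and N = p^{12λ+9} (3Q)²; (v) p = 12n+1, N = p^{12λ+5} (3Q)², and n ≡ 0 or 1 (mod 7); (vi) p = 12n+5, N = p^{12λ+5} (3Q)², and n ≡ 2 or 3 (mod 7); (vii) p = 12n+1, N = p^{12λ+5} (21Q)², and n ≡ 2, 3, 5, or 6 (mod 7); (viii) p = 12n+5, N = p^{12λ+5} (21Q)², and n ≡ 0, 1, 4, or 5 (mod 7). -/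
open Finset

lemma castmod {k p r : ℕ} (h : p % k = r) : (p : ZMod k) = (r : ZMod k) := by
  conv_lhs => rw [← Nat.div_add_mod p k, h]
  push_cast; simp

lemma geo_cast (p a k : ℕ) :
    ((∑ i ∈ range (a+1), p ^ i : ℕ) : ZMod k) = ∑ i ∈ range (a+1), (p : ZMod k) ^ i := by
  push_cast; rfl

-- sum of geometric series with ratio ≡ r (mod k)
lemma geo_mod_one {k p : ℕ} (a : ℕ) (h : p % k = 1) :
    ((∑ i ∈ range (a+1), p ^ i : ℕ) : ZMod k) = ((a+1 : ℕ) : ZMod k) := by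
  rw [geo_cast, castmod h]
  push_cast; simp

lemma geo_mod_negone {k p : ℕ} (a : ℕ) (hk : 2 ≤ k) (h : p % k = k - 1) (ha : Odd a) :
    ((∑ i ∈ range (a+1), p ^ i : ℕ) : ZMod k) = 0 := by
  have h' : (p : ZMod k) = -1 := by
    rw [castmod h]
    have : ((k - 1 : ℕ) : ZMod k) = ((k : ℕ) : ZMod k) - 1 := by
      push_cast [Nat.cast_sub (by omega : 1 ≤ k)]; ring
    rw [this]; simp
  rw [geo_cast, h', neg_one_geom_sum, if_pos ha.add_one]

lemma geo_parity {p : ℕ} (a : ℕ) (h : p % 2 = 1) :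
    (∑ i ∈ range (a+1), p ^ i) % 2 = (a+1) % 2 := by
  have h2 := geo_mod_one (k := 2) a h
  exact (ZMod.natCast_eq_natCast_iff _ _ _).mp h2

lemma square_of_even_fact {m : ℕ} (hm : m ≠ 0) (h : ∀ q, Even (m.factorization q)) :
    ∃ s, m = s ^ 2 := by
  refine ⟨∏ q ∈ m.primeFactors, q ^ (m.factorization q / 2), ?_⟩
  rw [← Finset.prod_pow]
  conv_lhs => rw [← Nat.factorization_prod_pow_eq_self hm]
  rw [Finsupp.prod, Nat.support_factorization]
  refine Finset.prod_congr rfl fun q hq => ?_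
  rw [← pow_mul]
  congr 1
  obtain ⟨c, hc⟩ := h q
  omega

lemma seven_dvd_geo {p a : ℕ} (h0 : p % 7 ≠ 0) (h1 : p % 7 ≠ 1) (h6 : 6 ∣ a + 1) :
    7 ∣ ∑ i ∈ range (a+1), p ^ i := by
  haveI : Fact (Nat.Prime 7) := ⟨by norm_num⟩
  rw [← ZMod.natCast_eq_zero_iff, geo_cast]
  have hp0 : (p : ZMod 7) ≠ 0 := by
    rw [Ne, ZMod.natCast_eq_zero_iff]; omega
  have hp1 : (p : ZMod 7) ≠ 1 := by
    rw [show (1 : ZMod 7) = ((1 : ℕ) : ZMod 7) by simp, Ne, ZMod.natCast_eq_natCast_iff]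
    intro hcon
    have : p % 7 = 1 % 7 := hcon
    omega
  have hgm := geom_sum_mul (p : ZMod 7) (a+1)
  obtain ⟨k, hk⟩ := h6
  have hpow : (p : ZMod 7) ^ (a+1) = 1 := by
    rw [hk, pow_mul, show (6 : ℕ) = 7 - 1 from rfl, ZMod.pow_card_sub_one_eq_one hp0, one_pow]
  rw [hpow, sub_self] at hgm
  rcases mul_eq_zero.mp hgm with hcase | hcase
  · exact hcase
  · exact absurd (sub_eq_zero.mp hcase) hp1

set_option maxHeartbeats 1000000 in
theorem fine_tuned_euler_form (N : ℕ) (hodd : Odd N)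
    (hperf : ∑ d ∈ N.divisors, d = 2 * N) :
    ∃ (p n lam Q : ℕ), p.Prime ∧ 0 < Q ∧ Odd Q ∧ ¬ p ∣ Q ∧
      ((p = 12 * n + 1 ∧ N = p ^ (12 * lam + 1) * Q ^ 2) ∨
       (p = 12 * n + 1 ∧ N = p ^ (12 * lam + 9) * Q ^ 2) ∨
       (p = 12 * n + 5 ∧ N = p ^ (12 * lam + 1) * (3 * Q) ^ 2) ∨
       (p = 12 * n + 5 ∧ N = p ^ (12 * lam + 9) * (3 * Q) ^ 2) ∨
       (p = 12 * n + 1 ∧ N = p ^ (12 * lam + 5) * (3 * Q) ^ 2 ∧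
         (n % 7 = 0 ∨ n % 7 = 1)) ∨
       (p = 12 * n + 5 ∧ N = p ^ (12 * lam + 5) * (3 * Q) ^ 2 ∧
         (n % 7 = 2 ∨ n % 7 = 3)) ∨
       (p = 12 * n + 1 ∧ N = p ^ (12 * lam + 5) * (21 * Q) ^ 2 ∧
         (n % 7 = 2 ∨ n % 7 = 3 ∨ n % 7 = 5 ∨ n % 7 = 6)) ∨
       (p = 12 * n + 5 ∧ N = p ^ (12 * lam + 5) * (21 * Q) ^ 2 ∧
         (n % 7 = 0 ∨ n % 7 = 1 ∨ n % 7 = 4 ∨ n % 7 = 5))) := by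
  classical
  have hN2 : N % 2 = 1 := Nat.odd_iff.mp hodd
  have hN0 : N ≠ 0 := by omega
  -- Step A: there is a prime with odd exponent
  have hA : ∃ p ∈ N.primeFactors, Odd (N.factorization p) := by
    by_contra hc
    push_neg at hc
    simp only [Nat.not_odd_iff_even] at hc
    have hoddsum : Odd (∑ d ∈ N.divisors, d) := by
      rw [Nat.sum_divisors hN0]
      refine Finset.prod_induction _ Odd (fun x y => Odd.mul) odd_one fun q hq => ?_
      have hqp := Nat.prime_of_mem_primeFactors hq
      have hqN : q ∣ N := Nat.dvd_of_mem_primeFactors hq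
      have hq2 : q % 2 = 1 := by
        rcases hqp.eq_two_or_odd with h | h
        · exfalso; obtain ⟨c, hc'⟩ := hqN; rw [h] at hc'; omega
        · exact h
      have := geo_parity (N.factorization q) hq2
      obtain ⟨c, hcc⟩ := hc q hq
      rw [Nat.odd_iff]
      omega
    rw [hperf, Nat.odd_iff] at hoddsum
    omega
  obtain ⟨p, hpmem, ha⟩ := hA
  have hp := Nat.prime_of_mem_primeFactors hpmem
  set a := N.factorization p with hadef
  set m := N / p ^ a with hmdef
  have hNm : p ^ a * m = N := Nat.ordProj_mul_ordCompl_eq_self N p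
  have hpm : ¬ p ∣ m := Nat.not_dvd_ordCompl hp hN0
  have hm0 : m ≠ 0 := by
    intro h; rw [h, mul_zero] at hNm; exact hN0 hNm.symm
  have hmodd : m % 2 = 1 := by
    have hO : Odd (p ^ a * m) := hNm ▸ hodd
    exact Nat.odd_iff.mp (Nat.odd_mul.mp hO).2
  have hpodd : p % 2 = 1 := by
    rcases hp.eq_two_or_odd with h | h
    · exfalso
      obtain ⟨c, hc'⟩ := Nat.dvd_of_mem_primeFactors hpmem
      rw [h] at hc'; omega
    · exact h
  have hcop : Nat.Coprime (p ^ a) m := Nat.Coprime.pow_left a ((hp.coprime_iff_not_dvd).mpr hpm)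
  set S := ∑ i ∈ range (a+1), p ^ i with hSdef
  set T := ∑ d ∈ m.divisors, d with hTdef
  have key : S * T = 2 * N := by
    have h1 := Nat.Coprime.sum_divisors_mul hcop
    rw [hNm, hperf] at h1
    have h2 : ∑ d ∈ (p ^ a).divisors, d = S := by
      rw [← ArithmeticFunction.sigma_one_apply, ArithmeticFunction.sigma_one_apply_prime_pow hp]
    rw [h2] at h1
    exact h1.symm
  have haodd : a % 2 = 1 := Nat.odd_iff.mp ha
  have hSpar : S % 2 = 0 := by have := geo_parity (p := p) a hpodd; omega
  obtain ⟨S', hS'⟩ : ∃ S', S = 2 * S' := ⟨S / 2, by omega⟩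
  have hS'T : S' * T = N := by
    have h2 : 2 * (S' * T) = 2 * N := by rw [← key, hS']; ring
    omega
  have hS'odd : S' % 2 = 1 := by
    rcases Nat.even_or_odd S' with he | ho
    · exfalso
      have hh : Even N := hS'T ▸ he.mul_right T
      rw [Nat.even_iff] at hh; omega
    · exact Nat.odd_iff.mp ho
  have hTodd : T % 2 = 1 := by
    rcases Nat.even_or_odd T with he | ho
    · exfalso
      have hh : Even N := hS'T ▸ he.mul_left S'
      rw [Nat.even_iff] at hh; omega
    · exact Nat.odd_iff.mp ho
  have hS4 : S % 4 = 2 := by omega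
  have hp4 : p % 4 = 1 := by
    by_contra h
    have h3 : p % 4 = 3 := by omega
    have h0 := geo_mod_negone (k := 4) (p := p) a (by norm_num) (by omega) ha
    rw [ZMod.natCast_eq_zero_iff] at h0
    omega
  have ha4 : a % 4 = 1 := by
    have h1 := geo_mod_one (k := 4) (p := p) a hp4
    have h2 : ((S : ℕ) : ZMod 4) = ((2 : ℕ) : ZMod 4) := by
      rw [ZMod.natCast_eq_natCast_iff]
      show S % 4 = 2 % 4
      omega
    rw [h1] at h2
    have h3 : (a + 1) % 4 = 2 % 4 := (ZMod.natCast_eq_natCast_iff _ _ _).mp h2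
    omega
  -- m is a perfect square
  obtain ⟨s, hms⟩ : ∃ s, m = s ^ 2 := by
    apply square_of_even_fact hm0
    intro q
    by_contra hqodd
    rw [Nat.not_even_iff_odd] at hqodd
    have hqmem : q ∈ m.primeFactors := by
      rw [← Nat.support_factorization, Finsupp.mem_support_iff]
      intro h; rw [h] at hqodd; simp [Nat.odd_iff] at hqodd
    have hqp := Nat.prime_of_mem_primeFactors hqmem
    have hq2 : q % 2 = 1 := by
      rcases hqp.eq_two_or_odd with h | h
      · exfalso
        obtain ⟨c, hc'⟩ := Nat.dvd_of_mem_primeFactors hqmem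
        rw [h] at hc'; omega
      · exact h
    have hfac : 2 ∣ ∑ i ∈ range (m.factorization q + 1), q ^ i := by
      have h1 := geo_parity (m.factorization q) hq2
      have h2 := Nat.odd_iff.mp hqodd
      omega
    have h2T : 2 ∣ T := by
      rw [hTdef, Nat.sum_divisors hm0]
      exact hfac.trans (Finset.dvd_prod_of_mem _ hqmem)
    omega
  have hs0 : s ≠ 0 := by rintro rfl; simp at hms; exact hm0 hms
  have hsodd : s % 2 = 1 := by
    rcases Nat.even_or_odd s with he | ho
    · exfalso
      have hh : Even m := by rw [hms, pow_two]; exact he.mul_right s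
      rw [Nat.even_iff] at hh; omega
    · exact Nat.odd_iff.mp ho
  have hps : ¬ p ∣ s := fun h => hpm (hms ▸ (h.mul_right s).trans (by rw [← pow_two]))
  have hNes : N = p ^ a * s ^ 2 := by rw [← hNm, hms]
  have hp3 : p % 3 = 1 ∨ p % 3 = 2 := by
    by_contra h
    have h0 : (3 : ℕ) ∣ p := by omega
    have := (Nat.prime_dvd_prime_iff_eq (by norm_num) hp).mp h0
    omega
  have hp12 : p % 12 = 1 ∨ p % 12 = 5 := by omega
  have ha12 : a % 12 = 1 ∨ a % 12 = 5 ∨ a % 12 = 9 := by omega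
  have hdvds : ∀ q : ℕ, q.Prime → q ≠ 2 → q ≠ p → q ∣ S → q ∣ s := by
    intro q hq hq2 hqp hqS
    have h2N : q ∣ 2 * N := key ▸ hqS.mul_right T
    have hqN : q ∣ N := by
      rcases (Nat.Prime.dvd_mul hq).mp h2N with h | h
      · exact absurd (by have := Nat.le_of_dvd (by norm_num) h; have := hq.two_le; omega) hq2
      · exact h
    rw [hNes] at hqN
    rcases (Nat.Prime.dvd_mul hq).mp hqN with h | h
    · exact absurd ((Nat.prime_dvd_prime_iff_eq hq hp).mp (hq.dvd_of_dvd_pow h)) hqp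
    · exact hq.dvd_of_dvd_pow h
  have h3s : (3 ∣ S) → ∃ Q, s = 3 * Q := by
    intro h
    exact hdvds 3 (by norm_num) (by norm_num) (by omega) h
  rcases ha12 with h1 | h5 | h9
  · -- a ≡ 1 (mod 12)
    rcases hp12 with hpc | hpc
    · refine ⟨p, p / 12, a / 12, s, hp, by omega, Nat.odd_iff.mpr hsodd, hps, Or.inl ⟨by omega, ?_⟩⟩
      rw [show 12 * (a / 12) + 1 = a by omega]; exact hNes
    · have h3S : 3 ∣ S := by
        have h0 := geo_mod_negone (k := 3) (p := p) a (by norm_num) (by omega) ha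
        rwa [ZMod.natCast_eq_zero_iff] at h0
      obtain ⟨Q, hQ⟩ := h3s h3S
      refine ⟨p, p / 12, a / 12, Q, hp, by omega, Nat.odd_iff.mpr (by omega),
        fun h => hps (hQ ▸ h.mul_left 3), Or.inr (Or.inr (Or.inl ⟨by omega, ?_⟩))⟩
      rw [show 12 * (a / 12) + 1 = a by omega, ← hQ]; exact hNes
  · -- a ≡ 5 (mod 12)
    have h3S : 3 ∣ S := by
      rcases hp3 with hc | hc
      · have h0 := geo_mod_one (k := 3) (p := p) a hc
        have h00 : ((a + 1 : ℕ) : ZMod 3) = 0 := by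
          rw [ZMod.natCast_eq_zero_iff]; omega
        rw [h00] at h0
        rwa [ZMod.natCast_eq_zero_iff] at h0
      · have h0 := geo_mod_negone (k := 3) (p := p) a (by norm_num) (by omega) ha
        rwa [ZMod.natCast_eq_zero_iff] at h0
    obtain ⟨Q0, hQ0⟩ := h3s h3S
    have hQ0odd : Q0 % 2 = 1 := by omega
    have hpQ0 : ¬ p ∣ Q0 := fun h => hps (hQ0 ▸ h.mul_left 3)
    have h6a : 6 ∣ a + 1 := by omega
    have hnot7 : p % 7 ≠ 0 := by
      intro h
      have h0 : (7 : ℕ) ∣ p := by omega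
      have := (Nat.prime_dvd_prime_iff_eq (by norm_num) hp).mp h0
      omega
    have h7Q : p % 7 ≠ 1 → ∃ Q, Q0 = 7 * Q := by
      intro h
      have h7s : 7 ∣ s := hdvds 7 (by norm_num) (by norm_num) (by omega)
        (seven_dvd_geo hnot7 h h6a)
      rw [hQ0] at h7s
      rcases (Nat.Prime.dvd_mul (by norm_num : Nat.Prime 7)).mp h7s with hh | hh
      · omega
      · exact hh
    have hQsq : p ^ a * s ^ 2 = p ^ (12 * (a / 12) + 5) * (3 * Q0) ^ 2 := by
      rw [show 12 * (a / 12) + 5 = a by omega, ← hQ0]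
    rcases hp12 with hpc | hpc
    · -- p ≡ 1 (mod 12)
      have hpn : p = 12 * (p / 12) + 1 := by omega
      have h7cases : p / 12 % 7 = 0 ∨ p / 12 % 7 = 1 ∨ p / 12 % 7 = 2 ∨ p / 12 % 7 = 3 ∨
          p / 12 % 7 = 4 ∨ p / 12 % 7 = 5 ∨ p / 12 % 7 = 6 := by omega
      rcases h7cases with h | h | h | h | h | h | h
      · exact ⟨p, p / 12, a / 12, Q0, hp, by omega, Nat.odd_iff.mpr hQ0odd, hpQ0,
          Or.inr (Or.inr (Or.inr (Or.inr (Or.inl ⟨hpn, by rw [hNes, hQsq], Or.inl h⟩))))⟩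
      · exact ⟨p, p / 12, a / 12, Q0, hp, by omega, Nat.odd_iff.mpr hQ0odd, hpQ0,
          Or.inr (Or.inr (Or.inr (Or.inr (Or.inl ⟨hpn, by rw [hNes, hQsq], Or.inr h⟩))))⟩
      · obtain ⟨Q, hQ⟩ := h7Q (by omega)
        exact ⟨p, p / 12, a / 12, Q, hp, by omega, Nat.odd_iff.mpr (by omega),
          fun hh => hpQ0 (hQ ▸ hh.mul_left 7),
          Or.inr (Or.inr (Or.inr (Or.inr (Or.inr (Or.inr (Or.inl ⟨hpn,
            by rw [hNes, hQsq, show 21 * Q = 3 * Q0 by omega], by omega⟩))))))⟩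
      · obtain ⟨Q, hQ⟩ := h7Q (by omega)
        exact ⟨p, p / 12, a / 12, Q, hp, by omega, Nat.odd_iff.mpr (by omega),
          fun hh => hpQ0 (hQ ▸ hh.mul_left 7),
          Or.inr (Or.inr (Or.inr (Or.inr (Or.inr (Or.inr (Or.inl ⟨hpn,
            by rw [hNes, hQsq, show 21 * Q = 3 * Q0 by omega], by omega⟩))))))⟩
      · exact absurd (by omega : p % 7 = 0) hnot7
      · obtain ⟨Q, hQ⟩ := h7Q (by omega)
        exact ⟨p, p / 12, a / 12, Q, hp, by omega, Nat.odd_iff.mpr (by omega),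
          fun hh => hpQ0 (hQ ▸ hh.mul_left 7),
          Or.inr (Or.inr (Or.inr (Or.inr (Or.inr (Or.inr (Or.inl ⟨hpn,
            by rw [hNes, hQsq, show 21 * Q = 3 * Q0 by omega], by omega⟩))))))⟩
      · obtain ⟨Q, hQ⟩ := h7Q (by omega)
        exact ⟨p, p / 12, a / 12, Q, hp, by omega, Nat.odd_iff.mpr (by omega),
          fun hh => hpQ0 (hQ ▸ hh.mul_left 7),
          Or.inr (Or.inr (Or.inr (Or.inr (Or.inr (Or.inr (Or.inl ⟨hpn,
            by rw [hNes, hQsq, show 21 * Q = 3 * Q0 by omega], by omega⟩))))))⟩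
    · -- p ≡ 5 (mod 12)
      have hpn : p = 12 * (p / 12) + 5 := by omega
      have h7cases : p / 12 % 7 = 0 ∨ p / 12 % 7 = 1 ∨ p / 12 % 7 = 2 ∨ p / 12 % 7 = 3 ∨
          p / 12 % 7 = 4 ∨ p / 12 % 7 = 5 ∨ p / 12 % 7 = 6 := by omega
      rcases h7cases with h | h | h | h | h | h | h
      · obtain ⟨Q, hQ⟩ := h7Q (by omega)
        exact ⟨p, p / 12, a / 12, Q, hp, by omega, Nat.odd_iff.mpr (by omega),
          fun hh => hpQ0 (hQ ▸ hh.mul_left 7),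
          Or.inr (Or.inr (Or.inr (Or.inr (Or.inr (Or.inr (Or.inr ⟨hpn,
            by rw [hNes, hQsq, show 21 * Q = 3 * Q0 by omega], by omega⟩))))))⟩
      · obtain ⟨Q, hQ⟩ := h7Q (by omega)
        exact ⟨p, p / 12, a / 12, Q, hp, by omega, Nat.odd_iff.mpr (by omega),
          fun hh => hpQ0 (hQ ▸ hh.mul_left 7),
          Or.inr (Or.inr (Or.inr (Or.inr (Or.inr (Or.inr (Or.inr ⟨hpn,
            by rw [hNes, hQsq, show 21 * Q = 3 * Q0 by omega], by omega⟩))))))⟩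
      · exact ⟨p, p / 12, a / 12, Q0, hp, by omega, Nat.odd_iff.mpr hQ0odd, hpQ0,
          Or.inr (Or.inr (Or.inr (Or.inr (Or.inr (Or.inl ⟨hpn, by rw [hNes, hQsq], by omega⟩)))))⟩
      · exact ⟨p, p / 12, a / 12, Q0, hp, by omega, Nat.odd_iff.mpr hQ0odd, hpQ0,
          Or.inr (Or.inr (Or.inr (Or.inr (Or.inr (Or.inl ⟨hpn, by rw [hNes, hQsq], by omega⟩)))))⟩
      · obtain ⟨Q, hQ⟩ := h7Q (by omega)
        exact ⟨p, p / 12, a / 12, Q, hp, by omega, Nat.odd_iff.mpr (by omega),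
          fun hh => hpQ0 (hQ ▸ hh.mul_left 7),
          Or.inr (Or.inr (Or.inr (Or.inr (Or.inr (Or.inr (Or.inr ⟨hpn,
            by rw [hNes, hQsq, show 21 * Q = 3 * Q0 by omega], by omega⟩))))))⟩
      · obtain ⟨Q, hQ⟩ := h7Q (by omega)
        exact ⟨p, p / 12, a / 12, Q, hp, by omega, Nat.odd_iff.mpr (by omega),
          fun hh => hpQ0 (hQ ▸ hh.mul_left 7),
          Or.inr (Or.inr (Or.inr (Or.inr (Or.inr (Or.inr (Or.inr ⟨hpn,
            by rw [hNes, hQsq, show 21 * Q = 3 * Q0 by omega], by omega⟩))))))⟩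
      · exact absurd (by omega : p % 7 = 0) hnot7
  · -- a ≡ 9 (mod 12)
    rcases hp12 with hpc | hpc
    · refine ⟨p, p / 12, a / 12, s, hp, by omega, Nat.odd_iff.mpr hsodd, hps,
        Or.inr (Or.inl ⟨by omega, ?_⟩)⟩
      rw [show 12 * (a / 12) + 9 = a by omega]; exact hNes
    · have h3S : 3 ∣ S := by
        have h0 := geo_mod_negone (k := 3) (p := p) a (by norm_num) (by omega) ha
        rwa [ZMod.natCast_eq_zero_iff] at h0
      obtain ⟨Q, hQ⟩ := h3s h3S
      refine ⟨p, p / 12, a / 12, Q, hp, by omega, Nat.odd_iff.mpr (by omega),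
        fun h => hps (hQ ▸ h.mul_left 3), Or.inr (Or.inr (Or.inr (Or.inl ⟨by omega, ?_⟩)))⟩
      rw [show 12 * (a / 12) + 9 = a by omega, ← hQ]; exact hNes
end
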